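/- arXiv:1710.00996 — 5 statements merged into one kernel-verified Lean document; each statement's English description precedes it below -/
import Mathlib

section
/- Let G : ℝ^n → ℝ be Lipschitz continuous (with respect to any norm), let u > 0, and let G_μ(x) = E_{z∼μ(u)}[G(x + z)] where μ(u) is the uniform distribution on the ℓ∞ ball of radius u. Then G_μ is differentiable at every point x ∈ ℝ^n, and its gradient satisfies ∇G_μ(x) = E_{z∼μ(u)}[∇G(x + z)], where ∇G exists Lebesgue-almost everywhere by Rademacher's theorem. -/
open MeasureTheory

/-- The smoothed version of `G`: the average of `G` over the ℓ∞ ball of radius `u`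
centered at `x` (note the sup norm is the norm of the Pi space `Fin n → ℝ`). -/
noncomputable def smoothed {n : ℕ} (G : (Fin n → ℝ) → ℝ) (u : ℝ) (x : Fin n → ℝ) : ℝ :=
  ((2 * u) ^ n)⁻¹ * ∫ z in Metric.closedBall (0 : Fin n → ℝ) u, G (x + z)

/-- If `G : ℝ^n → ℝ` is Lipschitz and `u > 0`, then the smoothed
function `G_μ(x) = E_{z ∼ μ(u)}[G(x + z)]` (uniform `z` over the ℓ∞ ball of radius
`u`) is differentiable at every point, with gradient `∇G_μ(x) = E_{z∼μ(u)}[∇G(x+z)]`.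
(`G` is differentiable a.e. by Rademacher; Mathlib's `fderiv` takes the junk value `0`
on the measure-zero set where `G` is not differentiable, so the expectation of the
gradient is well defined.) -/
theorem stmt_5 {n : ℕ} (G : (Fin n → ℝ) → ℝ) (K : NNReal) (hLip : LipschitzWith K G)
    (u : ℝ) (hu : 0 < u) :
    ∀ x : Fin n → ℝ,
      DifferentiableAt ℝ (smoothed G u) x ∧
      fderiv ℝ (smoothed G u) x =
        ((2 * u) ^ n)⁻¹ •
          ∫ z in Metric.closedBall (0 : Fin n → ℝ) u, fderiv ℝ G (x + z) := by
  intro x₀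
  set S := Metric.closedBall (0 : Fin n → ℝ) u with hS
  set μ : Measure (Fin n → ℝ) := volume.restrict S with hμ
  have hScompact : IsCompact S := isCompact_closedBall 0 u
  have hGc : Continuous G := hLip.continuous
  -- a.e. differentiability after translation
  have h_diff : ∀ᵐ z ∂μ, HasFDerivAt (fun x => G (x + z)) (fderiv ℝ G (x₀ + z)) x₀ := by
    apply ae_restrict_of_ae
    have h1 : ∀ᵐ z ∂(volume : Measure (Fin n → ℝ)), DifferentiableAt ℝ G (x₀ + z) :=
      ((measurePreserving_add_left volume x₀).quasiMeasurePreserving.tendsto_ae).eventually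
        hLip.ae_differentiableAt
    filter_upwards [h1] with z hz
    have h2 : HasFDerivAt (fun x : Fin n → ℝ => x + z) (ContinuousLinearMap.id ℝ _) x₀ :=
      (hasFDerivAt_id x₀).add_const z
    simpa [Function.comp_def] using hz.hasFDerivAt.comp x₀ h2
  have hF_meas : ∀ᶠ x in nhds x₀, AEStronglyMeasurable (fun z => G (x + z)) μ :=
    Filter.Eventually.of_forall fun x =>
      (hGc.comp (continuous_const.add continuous_id)).aestronglyMeasurable
  have hF_int : Integrable (fun z => G (x₀ + z)) μ :=
    ((hGc.comp (continuous_const.add continuous_id)).locallyIntegrable).integrableOn_isCompact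
      hScompact
  have hF'_meas : AEStronglyMeasurable (fun z => fderiv ℝ G (x₀ + z)) μ :=
    ((measurable_fderiv ℝ G).comp (measurable_const.add measurable_id)).aestronglyMeasurable
  have h_lip : ∀ᵐ z ∂μ, LipschitzOnWith (Real.nnabs ((K : ℝ)))
      (fun x => G (x + z)) (Metric.ball x₀ 1) := by
    refine Filter.Eventually.of_forall fun z => ?_
    have hlz : LipschitzWith K (fun x => G (x + z)) := fun x y => by
      simpa [edist_add_right] using hLip (x + z) (y + z)
    have hK : Real.nnabs ((K : ℝ)) = K := by
      ext; simp
    rw [hK]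
    exact hlz.lipschitzOnWith
  have bound_int : Integrable (fun _ : Fin n → ℝ => (K : ℝ)) μ := by
    rw [hμ]
    exact integrableOn_const hScompact.measure_lt_top.ne
  obtain ⟨hint, hder⟩ := hasFDerivAt_integral_of_dominated_loc_of_lip (𝕜 := ℝ)
    (F := fun x z => G (x + z)) (F' := fun z => fderiv ℝ G (x₀ + z)) (Metric.ball_mem_nhds x₀ one_pos)
    hF_meas hF_int hF'_meas h_lip bound_int h_diff
  have hsm : HasFDerivAt (smoothed G u)
      (((2 * u) ^ n)⁻¹ • ∫ z in S, fderiv ℝ G (x₀ + z)) x₀ := by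
    have := hder.const_mul (((2 * u) ^ n)⁻¹)
    exact this
  exact ⟨hsm.differentiableAt, hsm.fderiv⟩
end

section
/- Let u > 0 and for c ∈ ℝ^n let B(c) = {z ∈ ℝ^n : ‖z − c‖_∞ ≤ u} be the ℓ∞ ball of radius u centered at c, which has Lebesgue measure (2u)^n. Then for all x, y ∈ ℝ^n, the uniform densities on B(x) and B(y) satisfy ∫_{ℝ^n} |(2u)^{-n} 1_{B(x)}(z) − (2u)^{-n} 1_{B(y)}(z)| dz ≤ ‖x − y‖₁ / u; equivalently, the Lebesgue measure of the symmetric difference B(x) Δ B(y) is at most (2u)^n ‖x − y‖₁ / u. -/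
open MeasureTheory

lemma stmt7_key (a : ℝ) (ha : 0 ≤ a) {ι : Type*} [DecidableEq ι] (d : ι → ℝ)
    (hd : ∀ i, 0 ≤ d i) (s : Finset ι) :
    a ^ (s.card + 1) - a * ∏ i ∈ s, max 0 (a - d i) ≤ a ^ s.card * ∑ i ∈ s, d i := by
  induction s using Finset.induction_on with
  | empty => simp
  | @insert i s hi ih =>
    rw [Finset.card_insert_of_notMem hi, Finset.prod_insert hi, Finset.sum_insert hi]
    set P := ∏ j ∈ s, max 0 (a - d j) with hP
    have hP0 : 0 ≤ P := Finset.prod_nonneg fun j _ => le_max_left _ _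
    have hPa : P ≤ a ^ s.card := by
      calc P ≤ ∏ _j ∈ s, a :=
            Finset.prod_le_prod (fun j _ => le_max_left _ _)
              (fun j _ => max_le ha (by linarith [hd j]))
        _ = a ^ s.card := Finset.prod_const a
    have hm : a - d i ≤ max 0 (a - d i) := le_max_right _ _
    calc a ^ (s.card + 1 + 1) - a * (max 0 (a - d i) * P)
        ≤ a ^ (s.card + 1 + 1) - a * ((a - d i) * P) := by
          nlinarith [mul_le_mul_of_nonneg_right hm hP0,
            mul_le_mul_of_nonneg_left (mul_le_mul_of_nonneg_right hm hP0) ha]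
      _ = a * (a ^ (s.card + 1) - a * P) + d i * (a * P) := by ring
      _ ≤ a * (a ^ s.card * ∑ j ∈ s, d j) + d i * (a * a ^ s.card) := by
          have h1 := mul_le_mul_of_nonneg_left ih ha
          have h2 := mul_le_mul_of_nonneg_left
            (mul_le_mul_of_nonneg_left hPa ha) (hd i)
          linarith
      _ = a ^ (s.card + 1) * (d i + ∑ j ∈ s, d j) := by ring

/-- For `u > 0` let `B(c)` be the ℓ∞ ball of radius `u` centered at
`c` in `ℝ^n` (the closed ball for the sup norm of the Pi space `Fin n → ℝ`), which has
Lebesgue measure `(2u)^n`. Then the L¹ distance between the uniform densities on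
`B(x)` and `B(y)` is at most `‖x - y‖₁ / u`; equivalently, the Lebesgue measure of the
symmetric difference `B(x) Δ B(y)` is at most `(2u)^n ‖x - y‖₁ / u`. -/
theorem stmt_7 {n : ℕ} (u : ℝ) (hu : 0 < u) (x y : Fin n → ℝ) :
    (∫ z : Fin n → ℝ,
        |(Metric.closedBall x u).indicator (fun _ => ((2 * u) ^ n)⁻¹) z -
          (Metric.closedBall y u).indicator (fun _ => ((2 * u) ^ n)⁻¹) z|) ≤
      (∑ i, |x i - y i|) / u ∧
    volume (symmDiff (Metric.closedBall x u) (Metric.closedBall y u)) ≤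
      ENNReal.ofReal ((2 * u) ^ n * (∑ i, |x i - y i|) / u) := by
  set A := Metric.closedBall x u with hAdef
  set B := Metric.closedBall y u with hBdef
  have h2u : (0:ℝ) < 2 * u := by linarith
  set V : ℝ := (2 * u) ^ n with hV
  have hV0 : 0 < V := pow_pos h2u n
  set d : Fin n → ℝ := fun i => |x i - y i| with hd
  have hd0 : ∀ i, 0 ≤ d i := fun i => abs_nonneg _
  set W : ℝ := ∏ i, max 0 (2 * u - d i) with hW
  have hW0 : 0 ≤ W := Finset.prod_nonneg fun j _ => le_max_left _ _
  have hWV : W ≤ V := by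
    calc W ≤ ∏ _j : Fin n, (2 * u) :=
          Finset.prod_le_prod (fun j _ => le_max_left _ _)
            (fun j _ => max_le h2u.le (by linarith [hd0 j]))
      _ = V := by rw [Finset.prod_const, Finset.card_univ, Fintype.card_fin, hV]
  have hAm : MeasurableSet A := Metric.isClosed_closedBall.measurableSet
  have hBm : MeasurableSet B := Metric.isClosed_closedBall.measurableSet
  -- volumes
  have hApi : A = Set.pi Set.univ fun i => Set.Icc (x i - u) (x i + u) := by
    rw [hAdef, closedBall_pi _ hu.le]
    simp [Real.closedBall_eq_Icc]
  have hBpi : B = Set.pi Set.univ fun i => Set.Icc (y i - u) (y i + u) := by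
    rw [hBdef, closedBall_pi _ hu.le]
    simp [Real.closedBall_eq_Icc]
  have volA : volume A = ENNReal.ofReal V := by
    rw [hApi, volume_pi_pi]
    have : ∀ i : Fin n, x i + u - (x i - u) = 2 * u := fun i => by ring
    simp [Real.volume_Icc, this, Finset.prod_const,
      ← ENNReal.ofReal_pow h2u.le]
    rw [hV, ENNReal.ofReal_pow h2u.le, ENNReal.ofReal_mul (by norm_num)]
    norm_num
  have volB : volume B = ENNReal.ofReal V := by
    rw [hBpi, volume_pi_pi]
    have : ∀ i : Fin n, y i + u - (y i - u) = 2 * u := fun i => by ring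
    simp [Real.volume_Icc, this, Finset.prod_const,
      ← ENNReal.ofReal_pow h2u.le]
    rw [hV, ENNReal.ofReal_pow h2u.le, ENNReal.ofReal_mul (by norm_num)]
    norm_num
  have volAB : volume (A ∩ B) = ENNReal.ofReal W := by
    have hinter : A ∩ B = Set.pi Set.univ fun i =>
        Set.Icc (max (x i - u) (y i - u)) (min (x i + u) (y i + u)) := by
      rw [hApi, hBpi, ← Set.pi_inter_distrib]
      simp [Set.Icc_inter_Icc]
    have hlen : ∀ i : Fin n,
        min (x i + u) (y i + u) - max (x i - u) (y i - u) = 2 * u - d i := by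
      intro i
      simp only [hd]
      rcases le_total (x i) (y i) with h | h
      · rw [abs_of_nonpos (by linarith), min_eq_left (by linarith),
          max_eq_right (by linarith)]; ring
      · rw [abs_of_nonneg (by linarith), min_eq_right (by linarith),
          max_eq_left (by linarith)]; ring
    rw [hinter, volume_pi_pi]
    rw [hW, ENNReal.ofReal_prod_of_nonneg fun j _ => le_max_left _ _]
    congr 1
    funext i
    rw [Real.volume_Icc, hlen i]
    rcases le_total 0 (2 * u - d i) with h | h
    · rw [max_eq_right h]
    · rw [max_eq_left h, ENNReal.ofReal_eq_zero.2 h, ENNReal.ofReal_zero]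
  -- key inequality
  have hsum : ∑ i, d i = ∑ i, |x i - y i| := rfl
  have hkey : 2 * u * (V - W) ≤ V * ∑ i, d i := by
    have := stmt7_key (2 * u) h2u.le d hd0 Finset.univ
    rw [Finset.card_univ, Fintype.card_fin] at this
    have hpow : (2 * u) ^ (n + 1) = 2 * u * V := by rw [hV]; ring
    nlinarith [this]
  have hVW : V - W ≤ V * (∑ i, d i) / (2 * u) := by
    rw [le_div_iff₀ h2u]; nlinarith [hkey]
  -- symm diff volume
  have hABfin : volume (A ∩ B) ≠ ⊤ := by rw [volAB]; exact ENNReal.ofReal_ne_top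
  have voldiff1 : volume (A \ B) = ENNReal.ofReal (V - W) := by
    rw [← Set.diff_self_inter, measure_diff Set.inter_subset_left
      (hAm.inter hBm).nullMeasurableSet hABfin, volA, volAB,
      ENNReal.ofReal_sub _ hW0]
  have voldiff2 : volume (B \ A) = ENNReal.ofReal (V - W) := by
    rw [← Set.diff_self_inter, Set.inter_comm B A, measure_diff Set.inter_subset_right
      (hAm.inter hBm).nullMeasurableSet hABfin, volB, volAB,
      ENNReal.ofReal_sub _ hW0]
  have volsymm : volume (symmDiff A B) = ENNReal.ofReal (2 * (V - W)) := by
    rw [Set.symmDiff_def, measure_union (disjoint_sdiff_sdiff) (hBm.diff hAm),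
      voldiff1, voldiff2, ← ENNReal.ofReal_add (by linarith) (by linarith)]
    congr 1; ring
  have hbound2 : volume (symmDiff A B) ≤
      ENNReal.ofReal ((2 * u) ^ n * (∑ i, |x i - y i|) / u) := by
    rw [volsymm]
    apply ENNReal.ofReal_le_ofReal
    rw [← hsum, ← hV, le_div_iff₀ hu]
    nlinarith [hkey]
  refine ⟨?_, hbound2⟩
  -- integral part
  have heq : (fun z : Fin n → ℝ =>
      |A.indicator (fun _ => ((2 * u) ^ n)⁻¹) z -
        B.indicator (fun _ => ((2 * u) ^ n)⁻¹) z|) =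
      (symmDiff A B).indicator (fun _ => V⁻¹) := by
    funext z
    by_cases hzA : z ∈ A <;> by_cases hzB : z ∈ B <;>
      simp [Set.indicator_apply, Set.mem_symmDiff, hzA, hzB, ← hV,
        abs_of_nonneg (le_of_lt (inv_pos.2 hV0))]
  rw [heq, integral_indicator_const _ (hAm.symmDiff hBm), smul_eq_mul]
  have htoReal : (volume (symmDiff A B)).toReal ≤
      (2 * u) ^ n * (∑ i, |x i - y i|) / u := by
    rw [volsymm, ENNReal.toReal_ofReal (by linarith : (0:ℝ) ≤ 2 * (V - W))]
    rw [← hsum, ← hV, le_div_iff₀ hu]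
    nlinarith [hkey]
  calc (volume (symmDiff A B)).toReal * V⁻¹
      ≤ ((2 * u) ^ n * (∑ i, |x i - y i|) / u) * V⁻¹ := by
        apply mul_le_mul_of_nonneg_right htoReal (le_of_lt (inv_pos.2 hV0))
    _ = (∑ i, |x i - y i|) / u := by
        rw [hV]; field_simp
end

section
/- Let G : ℝ^n → ℝ be continuously differentiable with coordinatewise antitone gradient (i.e., ∇G(a) ⪰ ∇G(b) coordinatewise whenever a ⪯ b coordinatewise; this is the DR-submodularity property). Then for every x ∈ ℝ^n and every x* ∈ ℝ^n with x* ⪰ 0 coordinatewise, G(x* + x) − G(x) ≤ ⟨∇G(x), x*⟩. -/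
lemma fderiv_apply_nonneg_anti {n : ℕ} (G : (Fin n → ℝ) → ℝ)
    (hanti : ∀ a b : Fin n → ℝ, a ≤ b → ∀ i : Fin n,
      fderiv ℝ G b (Pi.single i 1) ≤ fderiv ℝ G a (Pi.single i 1))
    {a b v : Fin n → ℝ} (hab : a ≤ b) (hv : 0 ≤ v) :
    fderiv ℝ G b v ≤ fderiv ℝ G a v := by
  have hvsum : v = ∑ i : Fin n, v i • (Pi.single i (1:ℝ) : Fin n → ℝ) := by
    funext j
    simp [Finset.sum_apply, Pi.single_apply]
  rw [hvsum, map_sum, map_sum]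
  refine Finset.sum_le_sum fun i _ => ?_
  rw [map_smul, map_smul]
  exact mul_le_mul_of_nonneg_left (hanti a b hab i) (hv i)

/-- If `G : ℝ^n → ℝ` is continuously differentiable with
coordinatewise antitone gradient (DR-submodularity), then for every `x` and every
`x* ⪰ 0`, `G(x* + x) - G(x) ≤ ⟨∇G(x), x*⟩`. -/
theorem stmt_9 {n : ℕ} (G : (Fin n → ℝ) → ℝ) (hG : ContDiff ℝ 1 G)
    (hanti : ∀ a b : Fin n → ℝ, a ≤ b → ∀ i : Fin n,
      fderiv ℝ G b (Pi.single i 1) ≤ fderiv ℝ G a (Pi.single i 1)) :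
    ∀ x xstar : Fin n → ℝ, 0 ≤ xstar →
      G (xstar + x) - G x ≤ fderiv ℝ G x xstar := by
  intro x xstar hxs
  have hGd : Differentiable ℝ G := hG.differentiable one_ne_zero
  set g : ℝ → ℝ := fun t => G (x + t • xstar) with hg
  have hderiv : ∀ t : ℝ, HasDerivAt g (fderiv ℝ G (x + t • xstar) xstar) t := by
    intro t
    have h1 : HasDerivAt (fun t : ℝ => x + t • xstar) xstar t := by
      simpa using ((hasDerivAt_id t).smul_const xstar).const_add x
    exact (hGd (x + t • xstar)).hasFDerivAt.comp_hasDerivAt t h1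
  obtain ⟨c, hc, hceq⟩ := exists_hasDerivAt_eq_slope g
      (fun t => fderiv ℝ G (x + t • xstar) xstar) one_pos
      (fun t _ => (hderiv t).continuousAt.continuousWithinAt)
      (fun t _ => hderiv t)
  have h0 : g 0 = G x := by simp [hg]
  have h1 : g 1 = G (xstar + x) := by simp [hg, add_comm]
  have hle : fderiv ℝ G (x + c • xstar) xstar ≤ fderiv ℝ G x xstar := by
    refine fderiv_apply_nonneg_anti G hanti ?_ hxs
    intro i
    have h2 : 0 ≤ c * xstar i := mul_nonneg hc.1.le (hxs i)
    simp only [Pi.add_apply, Pi.smul_apply, smul_eq_mul]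
    exact le_add_of_nonneg_right h2
  have : g 1 - g 0 = fderiv ℝ G (x + c • xstar) xstar := by
    rw [hceq]; ring
  rw [← h0, ← h1, this]
  exact hle
end

section
/- Let f : 2^X → ℝ be a monotone submodular function on a finite ground set X with f(∅) = 0, let p be any probability distribution over subsets of X, and let x ∈ [0,1]^X be its vector of marginals, x_j = Pr_{S∼p}[j ∈ S]. Then E_{S∼p}[f(S)] ≤ (e/(e−1)) · F(x), where F is the multilinear extension of f; that is, the correlation gap of any monotone submodular function is at most e/(e−1). -/
open Finset

/-- The multilinear extension of a set function `f` on ground set `Fin n`. -/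
noncomputable def multilinearExt {n : ℕ} (f : Finset (Fin n) → ℝ) (x : Fin n → ℝ) : ℝ :=
  ∑ S : Finset (Fin n), f S * ((∏ j ∈ S, x j) * ∏ j ∈ Sᶜ, (1 - x j))


namespace Stmt16Aux

variable {n : ℕ}

noncomputable def W (z : Fin n → ℝ) (S : Finset (Fin n)) : ℝ :=
  (∏ j ∈ S, z j) * ∏ j ∈ Sᶜ, (1 - z j)

noncomputable def Ef (g : Finset (Fin n) → ℝ) (z : Fin n → ℝ) : ℝ :=
  ∑ S : Finset (Fin n), g S * W z S

noncomputable def Dif (g : Finset (Fin n) → ℝ) (i : Fin n) (z : Fin n → ℝ) : ℝ :=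
  Ef g (Function.update z i 1) - Ef g (Function.update z i 0)

noncomputable def V (i : Fin n) (z : Fin n → ℝ) (S : Finset (Fin n)) : ℝ :=
  (∏ j ∈ S, z j) * ∏ j ∈ (insert i S)ᶜ, (1 - z j)

lemma prod_comp_update_of_mem (φ : ℝ → ℝ) (z : Fin n → ℝ) (i : Fin n) (a : ℝ)
    {s : Finset (Fin n)} (h : i ∈ s) :
    ∏ j ∈ s, φ (Function.update z i a j) = φ a * ∏ j ∈ s.erase i, φ (z j) := by
  rw [← Finset.mul_prod_erase s _ h, Function.update_self]
  congr 1
  exact Finset.prod_congr rfl fun j hj => by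
    rw [Function.update_of_ne (Finset.ne_of_mem_erase hj)]

lemma prod_comp_update_of_not_mem (φ : ℝ → ℝ) (z : Fin n → ℝ) (i : Fin n) (a : ℝ)
    {s : Finset (Fin n)} (h : i ∉ s) :
    ∏ j ∈ s, φ (Function.update z i a j) = ∏ j ∈ s, φ (z j) :=
  Finset.prod_congr rfl fun j hj => by
    rw [Function.update_of_ne (by rintro rfl; exact h hj)]

lemma sum_W (z : Fin n → ℝ) : ∑ S : Finset (Fin n), W z S = 1 := by
  have h := Finset.prod_add z (fun j => 1 - z j) (univ : Finset (Fin n))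
  have h1 : ∏ j : Fin n, (z j + (1 - z j)) = 1 := by
    rw [Finset.prod_congr rfl (fun j _ => by ring : ∀ j ∈ univ, z j + (1 - z j) = (1:ℝ))]
    exact Finset.prod_const_one
  rw [h1, Finset.powerset_univ] at h
  rw [h]
  exact Finset.sum_congr rfl fun S _ => by
    rw [W, Finset.compl_eq_univ_sdiff]

lemma W_nonneg {z : Fin n → ℝ} (h0 : ∀ j, 0 ≤ z j) (h1 : ∀ j, z j ≤ 1) (S : Finset (Fin n)) :
    0 ≤ W z S :=
  mul_nonneg (Finset.prod_nonneg fun j _ => h0 j)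
    (Finset.prod_nonneg fun j _ => by linarith [h1 j])

lemma V_nonneg {z : Fin n → ℝ} (h0 : ∀ j, 0 ≤ z j) (h1 : ∀ j, z j ≤ 1) (i : Fin n)
    (S : Finset (Fin n)) : 0 ≤ V i z S :=
  mul_nonneg (Finset.prod_nonneg fun j _ => h0 j)
    (Finset.prod_nonneg fun j _ => by linarith [h1 j])

lemma W_eq_prod_univ (z : Fin n → ℝ) (S : Finset (Fin n)) :
    W z S = ∏ j : Fin n, (if j ∈ S then z j else 1 - z j) := by
  rw [W, ← Finset.prod_mul_prod_compl S (fun j => if j ∈ S then z j else 1 - z j)]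
  congr 1
  · exact Finset.prod_congr rfl fun j hj => (if_pos hj).symm
  · exact Finset.prod_congr rfl fun j hj => (if_neg (Finset.mem_compl.mp hj)).symm

lemma W_update_one_of_not_mem {i : Fin n} {S : Finset (Fin n)} (h : i ∉ S) (z : Fin n → ℝ) :
    W (Function.update z i 1) S = 0 := by
  rw [W]
  have h2 : ∏ j ∈ Sᶜ, (1 - Function.update z i 1 j) = 0 :=
    Finset.prod_eq_zero (Finset.mem_compl.mpr h) (by simp)
  rw [h2, mul_zero]

lemma W_update_zero_of_mem {i : Fin n} {S : Finset (Fin n)} (h : i ∈ S) (z : Fin n → ℝ) :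
    W (Function.update z i 0) S = 0 := by
  rw [W]
  have h2 : ∏ j ∈ S, Function.update z i 0 j = 0 := Finset.prod_eq_zero h (by simp)
  rw [h2, zero_mul]

lemma W_update_zero_of_not_mem {i : Fin n} {S : Finset (Fin n)} (h : i ∉ S) (z : Fin n → ℝ) :
    W (Function.update z i 0) S = V i z S := by
  rw [W, V]
  congr 1
  · exact prod_comp_update_of_not_mem (fun a => a) z i 0 h
  · rw [prod_comp_update_of_mem (fun a => 1 - a) z i 0 (Finset.mem_compl.mpr h),
      Finset.compl_insert]
    norm_num

lemma W_update_one_of_mem {i : Fin n} {S : Finset (Fin n)} (h : i ∈ S) (z : Fin n → ℝ) :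
    W (Function.update z i 1) S = V i z (S.erase i) := by
  rw [W, V]
  congr 1
  · rw [prod_comp_update_of_mem (fun a => a) z i 1 h, one_mul]
  · rw [Finset.insert_erase h]
    exact prod_comp_update_of_not_mem (fun a => 1 - a) z i 1 (fun hc => (Finset.mem_compl.mp hc) h)






lemma Ef_update_zero (g : Finset (Fin n) → ℝ) (z : Fin n → ℝ) (i : Fin n) :
    Ef g (Function.update z i 0)
      = ∑ S ∈ univ.filter (fun S => i ∉ S), g S * V i z S := by
  rw [Ef, ← Finset.sum_filter_add_sum_filter_not univ (fun S => i ∉ S)]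
  have h2 : ∑ S ∈ univ.filter (fun S => ¬ i ∉ S), g S * W (Function.update z i 0) S = 0 :=
    Finset.sum_eq_zero fun S hS => by
      rw [W_update_zero_of_mem (not_not.mp (Finset.mem_filter.mp hS).2), mul_zero]
  rw [h2, add_zero]
  exact Finset.sum_congr rfl fun S hS => by
    rw [W_update_zero_of_not_mem (Finset.mem_filter.mp hS).2]

lemma Ef_update_one (g : Finset (Fin n) → ℝ) (z : Fin n → ℝ) (i : Fin n) :
    Ef g (Function.update z i 1)
      = ∑ S ∈ univ.filter (fun S => i ∉ S), g (insert i S) * V i z S := by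
  rw [Ef, ← Finset.sum_filter_add_sum_filter_not univ (fun S => i ∈ S)]
  have h2 : ∑ S ∈ univ.filter (fun S => ¬ i ∈ S), g S * W (Function.update z i 1) S = 0 :=
    Finset.sum_eq_zero fun S hS => by
      rw [W_update_one_of_not_mem (Finset.mem_filter.mp hS).2, mul_zero]
  rw [h2, add_zero]
  refine Finset.sum_bij' (fun S _ => S.erase i) (fun S _ => insert i S) ?_ ?_ ?_ ?_ ?_
  · intro S hS
    simp only [Finset.mem_filter, Finset.mem_univ, true_and] at hS ⊢
    exact Finset.notMem_erase i S
  · intro S hS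
    simp only [Finset.mem_filter, Finset.mem_univ, true_and] at hS ⊢
    exact Finset.mem_insert_self i S
  · intro S hS
    simp only [Finset.mem_filter, Finset.mem_univ, true_and] at hS
    exact Finset.insert_erase hS
  · intro S hS
    simp only [Finset.mem_filter, Finset.mem_univ, true_and] at hS
    exact Finset.erase_insert hS
  · intro S hS
    simp only [Finset.mem_filter, Finset.mem_univ, true_and] at hS
    rw [W_update_one_of_mem hS, Finset.insert_erase hS]

lemma Dif_eq (g : Finset (Fin n) → ℝ) (i : Fin n) (z : Fin n → ℝ) :
    Dif g i z = ∑ S ∈ univ.filter (fun S => i ∉ S), (g (insert i S) - g S) * V i z S := by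
  rw [Dif, Ef_update_one, Ef_update_zero, ← Finset.sum_sub_distrib]
  exact Finset.sum_congr rfl fun S _ => by ring

lemma Dif_as_Ef (g : Finset (Fin n) → ℝ) (i : Fin n) (z : Fin n → ℝ) :
    Dif g i z = Ef (fun S => g (insert i S) - g S) (Function.update z i 0) := by
  rw [Dif_eq, Ef_update_zero]

lemma W_pin (z : Fin n → ℝ) (i : Fin n) (S : Finset (Fin n)) :
    W z S = (1 - z i) * W (Function.update z i 0) S + z i * W (Function.update z i 1) S := by
  by_cases h : i ∈ S
  · rw [W_update_zero_of_mem h, W_update_one_of_mem h, V, mul_zero, zero_add, W,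
      ← Finset.mul_prod_erase S z h]
    have : (insert i (S.erase i))ᶜ = Sᶜ := by rw [Finset.insert_erase h]
    rw [this]
    ring
  · rw [W_update_one_of_not_mem h, W_update_zero_of_not_mem h, V, mul_zero, add_zero, W,
      Finset.compl_insert, ← Finset.mul_prod_erase Sᶜ (fun j => 1 - z j) (Finset.mem_compl.mpr h)]
    ring

lemma Ef_pin (g : Finset (Fin n) → ℝ) (z : Fin n → ℝ) (i : Fin n) :
    Ef g z = (1 - z i) * Ef g (Function.update z i 0) + z i * Ef g (Function.update z i 1) := by
  simp only [Ef, Finset.mul_sum]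
  rw [← Finset.sum_add_distrib]
  exact Finset.sum_congr rfl fun S _ => by rw [W_pin z i S]; ring


section C
variable {n : ℕ}

lemma update_bd0 {z : Fin n → ℝ} (h0 : ∀ j, 0 ≤ z j) {a : ℝ} (ha : 0 ≤ a) (i : Fin n) :
    ∀ j, 0 ≤ Function.update z i a j := by
  intro j
  rcases eq_or_ne j i with h | h
  · subst h; rw [Function.update_self]; exact ha
  · rw [Function.update_of_ne h]; exact h0 j

lemma update_bd1 {z : Fin n → ℝ} (h1 : ∀ j, z j ≤ 1) {a : ℝ} (ha : a ≤ 1) (i : Fin n) :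
    ∀ j, Function.update z i a j ≤ 1 := by
  intro j
  rcases eq_or_ne j i with h | h
  · subst h; rw [Function.update_self]; exact ha
  · rw [Function.update_of_ne h]; exact h1 j

lemma Dif_nonneg (f : Finset (Fin n) → ℝ)
    (hmono : ∀ A B : Finset (Fin n), A ⊆ B → f A ≤ f B)
    {z : Fin n → ℝ} (h0 : ∀ j, 0 ≤ z j) (h1 : ∀ j, z j ≤ 1) (i : Fin n) :
    0 ≤ Dif f i z := by
  rw [Dif_eq]
  refine Finset.sum_nonneg fun S _ => ?_
  exact mul_nonneg (sub_nonneg.mpr (hmono _ _ (Finset.subset_insert i S))) (V_nonneg h0 h1 i S)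

lemma Dif_update_anti (f : Finset (Fin n) → ℝ)
    (hsub : ∀ A B : Finset (Fin n), A ⊆ B → ∀ i ∉ B,
      f (insert i A) - f A ≥ f (insert i B) - f B)
    {i k : Fin n} (hik : k ≠ i) {z : Fin n → ℝ} (h0 : ∀ j, 0 ≤ z j) (h1 : ∀ j, z j ≤ 1) :
    Dif f i (Function.update z k 1) ≤ Dif f i (Function.update z k 0) := by
  set G : Finset (Fin n) → ℝ := fun S => f (insert i S) - f S with hG
  have e1 : Dif f i (Function.update z k 1)
      = Ef G (Function.update (Function.update z i 0) k 1) := by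
    rw [Dif_as_Ef, Function.update_comm hik]
  have e2 : Dif f i (Function.update z k 0)
      = Ef G (Function.update (Function.update z i 0) k 0) := by
    rw [Dif_as_Ef, Function.update_comm hik]
  rw [e1, e2, ← sub_nonpos]
  have e3 : Ef G (Function.update (Function.update z i 0) k 1)
      - Ef G (Function.update (Function.update z i 0) k 0)
      = Dif G k (Function.update z i 0) := rfl
  rw [e3, Dif_eq]
  refine Finset.sum_nonpos fun S hS => ?_
  have hkS : k ∉ S := (Finset.mem_filter.mp hS).2
  have hV : 0 ≤ V k (Function.update z i 0) S :=
    V_nonneg (update_bd0 h0 le_rfl i) (update_bd1 h1 zero_le_one i) k S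
  have hGle : G (insert k S) - G S ≤ 0 := by
    by_cases hiS : i ∈ S
    · have a1 : insert i S = S := Finset.insert_eq_self.mpr hiS
      have a2 : insert i (insert k S) = insert k S :=
        Finset.insert_eq_self.mpr (Finset.mem_insert_of_mem hiS)
      simp [hG, a1, a2]
    · have hin : i ∉ insert k S := by
        simp only [Finset.mem_insert]
        push_neg
        exact ⟨fun e => hik e.symm, hiS⟩
      have := hsub S (insert k S) (Finset.subset_insert k S) i hin
      simp only [hG]
      linarith
  nlinarith [hGle, hV]

lemma Dif_update_one_le (f : Finset (Fin n) → ℝ)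
    (hmono : ∀ A B : Finset (Fin n), A ⊆ B → f A ≤ f B)
    (hsub : ∀ A B : Finset (Fin n), A ⊆ B → ∀ i ∉ B,
      f (insert i A) - f A ≥ f (insert i B) - f B)
    {i k : Fin n} (hik : k ≠ i) {z : Fin n → ℝ} (h0 : ∀ j, 0 ≤ z j) (h1 : ∀ j, z j ≤ 1) :
    Dif f i (Function.update z k 1) ≤ Dif f i z := by
  set G : Finset (Fin n) → ℝ := fun S => f (insert i S) - f S with hG
  have pin : Dif f i z = (1 - z k) * Dif f i (Function.update z k 0)
      + z k * Dif f i (Function.update z k 1) := by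
    rw [Dif_as_Ef, Ef_pin G (Function.update z i 0) k, Function.update_of_ne hik,
      Function.update_comm (Ne.symm hik) (0:ℝ) (0:ℝ) z,
      Function.update_comm (Ne.symm hik) (0:ℝ) (1:ℝ) z, ← Dif_as_Ef, ← Dif_as_Ef]
  have hanti := Dif_update_anti f hsub hik h0 h1
  have hpos : 0 ≤ Dif f i (Function.update z k 1) :=
    Dif_nonneg f hmono (update_bd0 h0 zero_le_one k) (update_bd1 h1 le_rfl k) i
  nlinarith [h0 k, h1 k, hanti, hpos, pin]
end C


section D
variable {n : ℕ}

noncomputable def zsup (z : Fin n → ℝ) (S : Finset (Fin n)) : Fin n → ℝ :=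
  fun j => if j ∈ S then 1 else z j

lemma zsup_empty (z : Fin n → ℝ) : zsup z ∅ = z :=
  funext fun j => if_neg (Finset.notMem_empty j)

lemma zsup_insert (z : Fin n → ℝ) (S : Finset (Fin n)) (k : Fin n) :
    zsup z (insert k S) = Function.update (zsup z S) k 1 := by
  funext j
  rcases eq_or_ne j k with h | h
  · subst h
    simp [zsup]
  · rw [Function.update_of_ne h]
    simp [zsup, Finset.mem_insert, h]

lemma zsup_bd0 {z : Fin n → ℝ} (h0 : ∀ j, 0 ≤ z j) (S : Finset (Fin n)) :
    ∀ j, 0 ≤ zsup z S j := by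
  intro j; rw [zsup]; split
  · exact zero_le_one
  · exact h0 j

lemma zsup_bd1 {z : Fin n → ℝ} (h1 : ∀ j, z j ≤ 1) (S : Finset (Fin n)) :
    ∀ j, zsup z S j ≤ 1 := by
  intro j; rw [zsup]; split
  · exact le_rfl
  · exact h1 j

lemma Dif_zsup_le (f : Finset (Fin n) → ℝ)
    (hmono : ∀ A B : Finset (Fin n), A ⊆ B → f A ≤ f B)
    (hsub : ∀ A B : Finset (Fin n), A ⊆ B → ∀ i ∉ B,
      f (insert i A) - f A ≥ f (insert i B) - f B)
    {z : Fin n → ℝ} (h0 : ∀ j, 0 ≤ z j) (h1 : ∀ j, z j ≤ 1) (i : Fin n) :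
    ∀ S : Finset (Fin n), i ∉ S → Dif f i (zsup z S) ≤ Dif f i z := by
  intro S
  induction S using Finset.induction_on with
  | empty => intro _; rw [zsup_empty]
  | @insert k S hk ih =>
    intro hi
    have hik : k ≠ i := fun e => hi (e ▸ Finset.mem_insert_self k S)
    have hiS : i ∉ S := fun h => hi (Finset.mem_insert_of_mem h)
    rw [zsup_insert]
    calc Dif f i (Function.update (zsup z S) k 1) ≤ Dif f i (zsup z S) :=
          Dif_update_one_le f hmono hsub hik (zsup_bd0 h0 S) (zsup_bd1 h1 S)
      _ ≤ Dif f i z := ih hiS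

lemma Ef_zsup_le (f : Finset (Fin n) → ℝ)
    (hmono : ∀ A B : Finset (Fin n), A ⊆ B → f A ≤ f B)
    (hsub : ∀ A B : Finset (Fin n), A ⊆ B → ∀ i ∉ B,
      f (insert i A) - f A ≥ f (insert i B) - f B)
    {z : Fin n → ℝ} (h0 : ∀ j, 0 ≤ z j) (h1 : ∀ j, z j ≤ 1) :
    ∀ S : Finset (Fin n), Ef f (zsup z S) ≤ Ef f z + ∑ j ∈ S, Dif f j z := by
  intro S
  induction S using Finset.induction_on with
  | empty => rw [zsup_empty]; simp
  | @insert k S hk ih =>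
    rw [zsup_insert, Finset.sum_insert hk]
    set w := zsup z S with hw
    have hw0 : ∀ j, 0 ≤ w j := zsup_bd0 h0 S
    have hw1 : ∀ j, w j ≤ 1 := zsup_bd1 h1 S
    have hpinEf := Ef_pin f w k
    have hD : Dif f k w = Ef f (Function.update w k 1) - Ef f (Function.update w k 0) := rfl
    have hDw : 0 ≤ Dif f k w := Dif_nonneg f hmono hw0 hw1 k
    have h4 : Dif f k w ≤ Dif f k z := Dif_zsup_le f hmono hsub h0 h1 k S hk
    have hwk1 : w k ≤ 1 := hw1 k
    have hwk0 : 0 ≤ w k := hw0 k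
    nlinarith [ih, hpinEf, hD, hDw, h4, hwk0, hwk1]

lemma f_le_Ef_zsup (f : Finset (Fin n) → ℝ)
    (hmono : ∀ A B : Finset (Fin n), A ⊆ B → f A ≤ f B)
    {z : Fin n → ℝ} (h0 : ∀ j, 0 ≤ z j) (h1 : ∀ j, z j ≤ 1) (S : Finset (Fin n)) :
    f S ≤ Ef f (zsup z S) := by
  have hb0 := zsup_bd0 h0 S
  have hb1 := zsup_bd1 h1 S
  have hfS : f S = ∑ R : Finset (Fin n), f S * W (zsup z S) R := by
    rw [← Finset.mul_sum, sum_W, mul_one]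
  rw [hfS, Ef]
  refine Finset.sum_le_sum fun R _ => ?_
  by_cases hSR : S ⊆ R
  · exact mul_le_mul_of_nonneg_right (hmono S R hSR) (W_nonneg hb0 hb1 R)
  · obtain ⟨j, hjS, hjR⟩ := Finset.not_subset.mp hSR
    have hW : W (zsup z S) R = 0 := by
      rw [W]
      have h2 : ∏ j' ∈ Rᶜ, (1 - zsup z S j') = 0 :=
        Finset.prod_eq_zero (Finset.mem_compl.mpr hjR) (by simp [zsup, hjS])
      rw [h2, mul_zero]
    rw [hW, mul_zero, mul_zero]

lemma grad_bound (f : Finset (Fin n) → ℝ)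
    (hmono : ∀ A B : Finset (Fin n), A ⊆ B → f A ≤ f B)
    (hsub : ∀ A B : Finset (Fin n), A ⊆ B → ∀ i ∉ B,
      f (insert i A) - f A ≥ f (insert i B) - f B)
    (p : Finset (Fin n) → ℝ) (hp : ∀ S, 0 ≤ p S) (hp1 : ∑ S : Finset (Fin n), p S = 1)
    {z : Fin n → ℝ} (h0 : ∀ j, 0 ≤ z j) (h1 : ∀ j, z j ≤ 1) :
    (∑ S : Finset (Fin n), p S * f S) ≤
      Ef f z + ∑ j : Fin n,
        (∑ S : Finset (Fin n), if j ∈ S then p S else 0) * Dif f j z := by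
  have step1 : ∀ S : Finset (Fin n), f S ≤ Ef f z + ∑ j ∈ S, Dif f j z := fun S =>
    le_trans (f_le_Ef_zsup f hmono h0 h1 S) (Ef_zsup_le f hmono hsub h0 h1 S)
  calc (∑ S : Finset (Fin n), p S * f S)
      ≤ ∑ S : Finset (Fin n), p S * (Ef f z + ∑ j ∈ S, Dif f j z) :=
        Finset.sum_le_sum fun S _ => mul_le_mul_of_nonneg_left (step1 S) (hp S)
    _ = (∑ S : Finset (Fin n), p S) * Ef f z
        + ∑ S : Finset (Fin n), p S * ∑ j ∈ S, Dif f j z := by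
        rw [Finset.sum_mul, ← Finset.sum_add_distrib]
        exact Finset.sum_congr rfl fun S _ => by ring
    _ = Ef f z + ∑ j : Fin n,
        (∑ S : Finset (Fin n), if j ∈ S then p S else 0) * Dif f j z := by
        rw [hp1, one_mul]
        congr 1
        have swap : ∀ S : Finset (Fin n), p S * ∑ j ∈ S, Dif f j z
            = ∑ j : Fin n, (if j ∈ S then p S * Dif f j z else 0) := by
          intro S
          rw [Finset.mul_sum]
          rw [Finset.sum_ite_mem univ S (fun j => p S * Dif f j z), Finset.univ_inter]
        rw [Finset.sum_congr rfl fun S _ => swap S, Finset.sum_comm]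
        refine Finset.sum_congr rfl fun j _ => ?_
        rw [Finset.sum_mul]
        refine Finset.sum_congr rfl fun S _ => ?_
        by_cases hjS : j ∈ S
        · rw [if_pos hjS, if_pos hjS]
        · rw [if_neg hjS, if_neg hjS, zero_mul]
end D


section E
variable {n : ℕ}

lemma prod_erase_eq_W_one {z : Fin n → ℝ} {j : Fin n} {S : Finset (Fin n)} (hj : j ∈ S) :
    ∏ k ∈ univ.erase j, (if k ∈ S then z k else 1 - z k) = W (Function.update z j 1) S := by
  rw [W_eq_prod_univ, ← Finset.mul_prod_erase univ
    (fun k => if k ∈ S then Function.update z j 1 k else 1 - Function.update z j 1 k)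
    (Finset.mem_univ j)]
  rw [if_pos hj, Function.update_self, one_mul]
  refine Finset.prod_congr rfl fun k hk => ?_
  rw [Function.update_of_ne (Finset.ne_of_mem_erase hk)]

lemma prod_erase_eq_W_zero {z : Fin n → ℝ} {j : Fin n} {S : Finset (Fin n)} (hj : j ∉ S) :
    ∏ k ∈ univ.erase j, (if k ∈ S then z k else 1 - z k) = W (Function.update z j 0) S := by
  rw [W_eq_prod_univ, ← Finset.mul_prod_erase univ
    (fun k => if k ∈ S then Function.update z j 0 k else 1 - Function.update z j 0 k)
    (Finset.mem_univ j)]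
  rw [if_neg hj, Function.update_self, sub_zero, one_mul]
  refine Finset.prod_congr rfl fun k hk => ?_
  rw [Function.update_of_ne (Finset.ne_of_mem_erase hk)]

lemma deriv_match (f : Finset (Fin n) → ℝ) (z : Fin n → ℝ) (x : Fin n → ℝ) (j : Fin n) :
    ∑ S : Finset (Fin n), f S * ((∏ k ∈ univ.erase j, (if k ∈ S then z k else 1 - z k))
        * (if j ∈ S then x j else -x j))
      = x j * Dif f j z := by
  have key : ∀ S : Finset (Fin n),
      f S * ((∏ k ∈ univ.erase j, (if k ∈ S then z k else 1 - z k))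
          * (if j ∈ S then x j else -x j))
        = x j * (f S * W (Function.update z j 1) S)
          - x j * (f S * W (Function.update z j 0) S) := by
    intro S
    by_cases hj : j ∈ S
    · rw [if_pos hj, prod_erase_eq_W_one hj, W_update_zero_of_mem hj]; ring
    · rw [if_neg hj, prod_erase_eq_W_zero hj, W_update_one_of_not_mem hj]; ring
  rw [Finset.sum_congr rfl fun S _ => key S, Finset.sum_sub_distrib,
    ← Finset.mul_sum, ← Finset.mul_sum]
  rw [Dif, Ef, Ef]
  ring

lemma hasDerivAt_Ef (f : Finset (Fin n) → ℝ) (x : Fin n → ℝ) (t : ℝ) :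
    HasDerivAt (fun t : ℝ => Ef f (fun j => t * x j))
      (∑ j : Fin n, x j * Dif f j (fun j => t * x j)) t := by
  have hfun : (fun t : ℝ => Ef f (fun j => t * x j)) =
      (fun t : ℝ => ∑ S : Finset (Fin n),
        f S * ∏ j : Fin n, (if j ∈ S then t * x j else 1 - t * x j)) := by
    funext s
    rw [Ef]
    refine Finset.sum_congr rfl fun S _ => ?_
    rw [W_eq_prod_univ]
  rw [hfun]
  have hder : ∀ S ∈ (univ : Finset (Finset (Fin n))), HasDerivAt
      (fun t : ℝ => f S * ∏ j : Fin n, (if j ∈ S then t * x j else 1 - t * x j))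
      (f S * ∑ j : Fin n, (∏ k ∈ univ.erase j, (if k ∈ S then t * x k else 1 - t * x k))
        * (if j ∈ S then x j else -x j)) t := by
    intro S _
    refine HasDerivAt.const_mul (f S) ?_
    have h := HasDerivAt.finset_prod (u := (univ : Finset (Fin n)))
      (f := fun j (s : ℝ) => if j ∈ S then s * x j else 1 - s * x j)
      (f' := fun j => if j ∈ S then x j else -x j) (x := t) ?_
    · simpa [smul_eq_mul, mul_comm, Finset.prod_fn] using h
    · intro j _
      by_cases hj : j ∈ S
      · simpa [hj] using hasDerivAt_mul_const (x j)
      · simpa [hj] using (hasDerivAt_mul_const (x j)).const_sub 1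
  have htot := HasDerivAt.sum hder
  have heq : ∑ S : Finset (Fin n),
      f S * ∑ j : Fin n, (∏ k ∈ univ.erase j, (if k ∈ S then t * x k else 1 - t * x k))
        * (if j ∈ S then x j else -x j)
      = ∑ j : Fin n, x j * Dif f j (fun j => t * x j) := by
    have expand : ∀ S : Finset (Fin n),
        f S * ∑ j : Fin n, (∏ k ∈ univ.erase j, (if k ∈ S then t * x k else 1 - t * x k))
          * (if j ∈ S then x j else -x j)
        = ∑ j : Fin n, f S * ((∏ k ∈ univ.erase j, (if k ∈ S then t * x k else 1 - t * x k))
          * (if j ∈ S then x j else -x j)) := fun S => Finset.mul_sum _ _ _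
    rw [Finset.sum_congr rfl fun S _ => expand S, Finset.sum_comm]
    exact Finset.sum_congr rfl fun j _ => deriv_match f (fun k => t * x k) x j
  rw [← heq]
  rw [Finset.sum_fn] at htot
  exact htot
end E


section F
variable {n : ℕ}

lemma Ef_zero (f : Finset (Fin n) → ℝ) : Ef f (fun _ => (0:ℝ)) = f ∅ := by
  rw [Ef]
  rw [Finset.sum_eq_single ∅]
  · rw [W]
    simp
  · intro S _ hS
    have h2 : ∏ j ∈ S, (0:ℝ) = 0 :=
      Finset.prod_eq_zero (Finset.nonempty_iff_ne_empty.mpr hS).choose_spec rfl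
    rw [W, h2, zero_mul, mul_zero]
  · intro h
    exact absurd (Finset.mem_univ ∅) h
end F

end Stmt16Aux

open Stmt16Aux in
/-- (Correlation gap.)  Let `f` be monotone submodular with
`f ∅ = 0`, let `p` be any probability distribution over subsets of `X`, and let
`x_j = Pr_{S∼p}[j ∈ S]` be the vector of marginals.  Then
`E_{S∼p}[f(S)] ≤ (e/(e-1)) F(x)`, where `F` is the multilinear extension of `f`. -/
theorem stmt_16 {n : ℕ} (f : Finset (Fin n) → ℝ)
    (hmono : ∀ A B : Finset (Fin n), A ⊆ B → f A ≤ f B)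
    (hsub : ∀ A B : Finset (Fin n), A ⊆ B → ∀ i ∉ B,
      f (insert i A) - f A ≥ f (insert i B) - f B)
    (hempty : f ∅ = 0)
    (p : Finset (Fin n) → ℝ) (hp : ∀ S, 0 ≤ p S) (hp1 : ∑ S : Finset (Fin n), p S = 1) :
    (∑ S : Finset (Fin n), p S * f S) ≤
      (Real.exp 1 / (Real.exp 1 - 1)) *
        multilinearExt f (fun j => ∑ S : Finset (Fin n), if j ∈ S then p S else 0) := by
  classical
  set x : Fin n → ℝ := fun j => ∑ S : Finset (Fin n), if j ∈ S then p S else 0 with hxdef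
  have hx0 : ∀ j, 0 ≤ x j := fun j =>
    Finset.sum_nonneg fun S _ => by by_cases h : j ∈ S <;> simp [h, hp S]
  have hx1 : ∀ j, x j ≤ 1 := fun j => by
    rw [hxdef, ← hp1]
    exact Finset.sum_le_sum fun S _ => by by_cases h : j ∈ S <;> simp [h, hp S]
  set c : ℝ := ∑ S : Finset (Fin n), p S * f S with hc
  set φ : ℝ → ℝ := fun t => Ef f (fun j => t * x j) with hφ
  set ψ : ℝ → ℝ := fun t => Real.exp t * (φ t - c) with hψ
  have hψd : ∀ t : ℝ, HasDerivAt ψ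
      (Real.exp t * (φ t - c)
        + Real.exp t * (∑ j : Fin n, x j * Dif f j (fun j => t * x j))) t := by
    intro t
    exact (Real.hasDerivAt_exp t).mul ((hasDerivAt_Ef f x t).sub_const c)
  have grad : ∀ t : ℝ, 0 ≤ t → t ≤ 1 →
      c ≤ φ t + ∑ j : Fin n, x j * Dif f j (fun j => t * x j) := by
    intro t ht0 ht1
    have h0 : ∀ j, 0 ≤ t * x j := fun j => mul_nonneg ht0 (hx0 j)
    have h1 : ∀ j, t * x j ≤ 1 := fun j =>
      le_trans (mul_le_mul ht1 (hx1 j) (hx0 j) zero_le_one) (by norm_num)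
    exact grad_bound f hmono hsub p hp hp1 h0 h1
  have mono : MonotoneOn ψ (Set.Icc 0 1) := by
    apply monotoneOn_of_deriv_nonneg (convex_Icc (0:ℝ) 1)
    · exact fun t _ => ((hψd t).differentiableAt).continuousAt.continuousWithinAt
    · intro t _
      exact ((hψd t).differentiableAt).differentiableWithinAt
    · intro t ht
      rw [interior_Icc] at ht
      rw [(hψd t).deriv]
      have hg := grad t (le_of_lt ht.1) (le_of_lt ht.2)
      have he : (0:ℝ) < Real.exp t := Real.exp_pos t
      nlinarith [hg, he]
  have h01 : ψ 0 ≤ ψ 1 :=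
    mono (Set.mem_Icc.mpr ⟨le_rfl, zero_le_one⟩) (Set.mem_Icc.mpr ⟨zero_le_one, le_rfl⟩)
      zero_le_one
  have hφ0 : φ 0 = 0 := by
    have : (fun j : Fin n => (0:ℝ) * x j) = fun _ => (0:ℝ) := by
      funext j; rw [zero_mul]
    rw [hφ]
    simp only [this]
    rw [Ef_zero, hempty]
  have hψ0 : ψ 0 = -c := by rw [hψ]; simp [hφ0]
  have hψ1 : ψ 1 = Real.exp 1 * (φ 1 - c) := rfl
  have key : -c ≤ Real.exp 1 * (φ 1 - c) := by rw [← hψ0, ← hψ1]; exact h01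
  have hφ1 : φ 1 = multilinearExt f x := by
    have : (fun j : Fin n => (1:ℝ) * x j) = x := by funext j; rw [one_mul]
    rw [hφ]
    simp only [this]
    rfl
  have hegt : (1:ℝ) < Real.exp 1 := Real.one_lt_exp_iff.mpr one_pos
  rw [← hφ1]
  rw [div_mul_eq_mul_div, le_div_iff₀ (by linarith)]
  nlinarith [key]
end

section
/- Let f : 2^X → ℝ be a submodular function on a finite ground set X with |X| = n. Then its multilinear extension F : [0,1]^n → ℝ is up-concave: for every x ∈ [0,1]^n and every direction d ∈ ℝ^n with d ⪰ 0 coordinatewise, the map ξ ↦ F(x + ξd) is concave on the interval of ξ ≥ 0 for which x + ξd ∈ [0,1]^n. -/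
open Finset

namespace Stmt17

variable {n : ℕ}

noncomputable def G (T : Finset (Fin n)) (h : Finset (Fin n) → ℝ) (z : Fin n → ℝ) : ℝ :=
  ∑ S ∈ T.powerset, h S * ((∏ j ∈ S, z j) * ∏ j ∈ T \ S, (1 - z j))

lemma multilinearExt_eq_G (f : Finset (Fin n) → ℝ) (z : Fin n → ℝ) :
    multilinearExt f z = G univ f z := by
  unfold multilinearExt G
  rw [← powerset_univ]
  exact sum_congr rfl fun S _ => by rw [compl_eq_univ_sdiff]

lemma G_nonpos {T : Finset (Fin n)} {h : Finset (Fin n) → ℝ} {z : Fin n → ℝ}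
    (hz0 : ∀ j, 0 ≤ z j) (hz1 : ∀ j, z j ≤ 1) (hh : ∀ S ∈ T.powerset, h S ≤ 0) :
    G T h z ≤ 0 := by
  refine sum_nonpos fun S hS => ?_
  have hw : 0 ≤ (∏ j ∈ S, z j) * ∏ j ∈ T \ S, (1 - z j) :=
    mul_nonneg (prod_nonneg fun j _ => hz0 j)
      (prod_nonneg fun j _ => by linarith [hz1 j])
  exact mul_nonpos_iff.2 (Or.inr ⟨hh S hS, hw⟩)

lemma inner_sum (T : Finset (Fin n)) (h : Finset (Fin n) → ℝ) (z d : Fin n → ℝ)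
    {i : Fin n} (hiT : i ∈ T) :
    (∑ S ∈ T.powerset,
      if i ∈ S then h S * ((∏ j ∈ S.erase i, z j) * ∏ j ∈ T \ S, (1 - z j)) * d i
        else -(h S * ((∏ j ∈ S, z j) * ∏ j ∈ (T \ S).erase i, (1 - z j)) * d i))
    = d i * G (T.erase i) (fun S => h (insert i S) - h S) z := by
  have hnot : i ∉ T.erase i := notMem_erase i T
  conv_lhs => rw [← insert_erase hiT]
  rw [sum_powerset_insert hnot]
  rw [G, mul_sum, ← sum_add_distrib]
  refine sum_congr rfl fun S hS => ?_
  rw [mem_powerset] at hS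
  have hiS : i ∉ S := fun hc => hnot (hS hc)
  have e1 : (insert i (T.erase i) \ S).erase i = T.erase i \ S := by
    ext a; simp only [mem_erase, mem_sdiff, mem_insert]; tauto
  have e2 : insert i (T.erase i) \ insert i S = T.erase i \ S := by
    ext a
    simp only [mem_sdiff, mem_insert, mem_erase, not_or]
    constructor
    · rintro ⟨h1 | h1, h2, h3⟩ <;> tauto
    · rintro ⟨⟨h1, h2⟩, h3⟩; tauto
  rw [if_neg hiS, if_pos (mem_insert_self i S), erase_insert hiS, e1, e2]
  ring

lemma key_identity (T : Finset (Fin n)) (h : Finset (Fin n) → ℝ) (z d : Fin n → ℝ) :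
    (∑ S ∈ T.powerset, h S *
      ((∑ i ∈ S, (∏ j ∈ S.erase i, z j) * d i) * ∏ j ∈ T \ S, (1 - z j)
        + (∏ j ∈ S, z j) * ∑ i ∈ T \ S, (∏ j ∈ (T \ S).erase i, (1 - z j)) * (-(d i))))
    = ∑ i ∈ T, d i * G (T.erase i) (fun S => h (insert i S) - h S) z := by
  have step1 : ∀ S ∈ T.powerset,
      h S * ((∑ i ∈ S, (∏ j ∈ S.erase i, z j) * d i) * ∏ j ∈ T \ S, (1 - z j)
        + (∏ j ∈ S, z j) * ∑ i ∈ T \ S, (∏ j ∈ (T \ S).erase i, (1 - z j)) * (-(d i)))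
      = ∑ i ∈ T,
        (if i ∈ S then h S * ((∏ j ∈ S.erase i, z j) * ∏ j ∈ T \ S, (1 - z j)) * d i
          else -(h S * ((∏ j ∈ S, z j) * ∏ j ∈ (T \ S).erase i, (1 - z j)) * d i)) := by
    intro S hS
    rw [mem_powerset] at hS
    rw [← Finset.sum_sdiff hS]
    have hA : (∑ i ∈ T \ S,
        (if i ∈ S then h S * ((∏ j ∈ S.erase i, z j) * ∏ j ∈ T \ S, (1 - z j)) * d i
          else -(h S * ((∏ j ∈ S, z j) * ∏ j ∈ (T \ S).erase i, (1 - z j)) * d i)))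
        = ∑ i ∈ T \ S, -(h S * ((∏ j ∈ S, z j) * ∏ j ∈ (T \ S).erase i, (1 - z j)) * d i) :=
      sum_congr rfl fun i hi => if_neg (mem_sdiff.1 hi).2
    have hB : (∑ i ∈ S,
        (if i ∈ S then h S * ((∏ j ∈ S.erase i, z j) * ∏ j ∈ T \ S, (1 - z j)) * d i
          else -(h S * ((∏ j ∈ S, z j) * ∏ j ∈ (T \ S).erase i, (1 - z j)) * d i)))
        = ∑ i ∈ S, h S * ((∏ j ∈ S.erase i, z j) * ∏ j ∈ T \ S, (1 - z j)) * d i :=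
      sum_congr rfl fun i hi => if_pos hi
    rw [hA, hB, mul_add, add_comm]
    congr 1
    · simp only [Finset.mul_sum, Finset.sum_mul]
      exact sum_congr rfl fun i _ => by ring
    · simp only [Finset.mul_sum, Finset.sum_mul]
      exact sum_congr rfl fun i _ => by ring
  rw [sum_congr rfl step1, Finset.sum_comm]
  exact sum_congr rfl fun i hi => inner_sum T h z d hi

lemma hasDerivAt_G (T : Finset (Fin n)) (h : Finset (Fin n) → ℝ) (x d : Fin n → ℝ) (ξ : ℝ) :
    HasDerivAt (fun t => G T h (fun j => x j + t * d j))
      (∑ i ∈ T, d i * G (T.erase i) (fun S => h (insert i S) - h S)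
        (fun j => x j + ξ * d j)) ξ := by
  have hy : ∀ j : Fin n, HasDerivAt (fun t : ℝ => x j + t * d j) (d j) ξ := fun j => by
    simpa using ((hasDerivAt_id ξ).mul_const (d j)).const_add (x j)
  have hp : ∀ S : Finset (Fin n), HasDerivAt (fun t => ∏ j ∈ S, (x j + t * d j))
      (∑ i ∈ S, (∏ j ∈ S.erase i, (x j + ξ * d j)) * d i) ξ := fun S => by
    simpa [smul_eq_mul] using
      HasDerivAt.fun_finsetProd (u := S) (f := fun j t => x j + t * d j)
        (f' := fun j => d j) (fun j _ => hy j)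
  have hq : ∀ S : Finset (Fin n), HasDerivAt (fun t => ∏ j ∈ T \ S, (1 - (x j + t * d j)))
      (∑ i ∈ T \ S, (∏ j ∈ (T \ S).erase i, (1 - (x j + ξ * d j))) * (-(d i))) ξ := fun S => by
    simpa [smul_eq_mul] using
      HasDerivAt.fun_finsetProd (u := T \ S) (f := fun j t => 1 - (x j + t * d j))
        (f' := fun j => -(d j)) (fun j _ => (hy j).const_sub 1)
  have hterm : ∀ S ∈ T.powerset, HasDerivAt
      (fun t => h S * ((∏ j ∈ S, (x j + t * d j)) * ∏ j ∈ T \ S, (1 - (x j + t * d j))))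
      (h S * ((∑ i ∈ S, (∏ j ∈ S.erase i, (x j + ξ * d j)) * d i)
          * ∏ j ∈ T \ S, (1 - (x j + ξ * d j))
        + (∏ j ∈ S, (x j + ξ * d j))
          * ∑ i ∈ T \ S, (∏ j ∈ (T \ S).erase i, (1 - (x j + ξ * d j))) * (-(d i)))) ξ :=
    fun S _ => ((hp S).mul (hq S)).const_mul (h S)
  have hsum := HasDerivAt.fun_sum hterm
  have hkey := key_identity T h (fun j => x j + ξ * d j) d
  rw [hkey] at hsum
  exact hsum

end Stmt17

open Stmt17

/-- The multilinear extension `F` of a submodular function `f` is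
up-concave: for every `x ∈ [0,1]^n` and every direction `d ⪰ 0`, the map
`ξ ↦ F(x + ξ d)` is concave on the set of `ξ ≥ 0` for which `x + ξ d ∈ [0,1]^n`. -/
theorem stmt_17 {n : ℕ} (f : Finset (Fin n) → ℝ)
    (hsub : ∀ A B : Finset (Fin n), A ⊆ B → ∀ i ∉ B,
      f (insert i A) - f A ≥ f (insert i B) - f B) :
    ∀ x ∈ Set.Icc (0 : Fin n → ℝ) 1, ∀ d : Fin n → ℝ, 0 ≤ d →
      ∀ ξ₁ ξ₂ : ℝ, 0 ≤ ξ₁ → 0 ≤ ξ₂ →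
        x + ξ₁ • d ∈ Set.Icc (0 : Fin n → ℝ) 1 →
        x + ξ₂ • d ∈ Set.Icc (0 : Fin n → ℝ) 1 →
        ∀ l : ℝ, 0 ≤ l → l ≤ 1 →
          multilinearExt f (x + (l * ξ₁ + (1 - l) * ξ₂) • d) ≥
            l * multilinearExt f (x + ξ₁ • d) +
              (1 - l) * multilinearExt f (x + ξ₂ • d) := by
  intro x hx d hd ξ₁ ξ₂ hξ₁ hξ₂ h1 h2 l hl0 hl1
  rw [Set.mem_Icc] at h1 h2
  have hdj : ∀ j, 0 ≤ d j := fun j => hd j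
  have h1a : ∀ j, 0 ≤ x j + ξ₁ * d j := fun j => by
    have := h1.1 j; simpa using this
  have h1b : ∀ j, x j + ξ₁ * d j ≤ 1 := fun j => by
    have := h1.2 j; simpa using this
  have h2a : ∀ j, 0 ≤ x j + ξ₂ * d j := fun j => by
    have := h2.1 j; simpa using this
  have h2b : ∀ j, x j + ξ₂ * d j ≤ 1 := fun j => by
    have := h2.2 j; simpa using this
  set a := min ξ₁ ξ₂ with ha
  set b := max ξ₁ ξ₂ with hb
  have hcoord : ∀ ξ ∈ Set.Icc a b, ∀ j, 0 ≤ x j + ξ * d j ∧ x j + ξ * d j ≤ 1 := by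
    intro ξ hξ j
    rcases le_total ξ₁ ξ₂ with hc | hc
    · have hal : a = ξ₁ := min_eq_left hc
      have hbr : b = ξ₂ := max_eq_right hc
      have hl : ξ₁ ≤ ξ := hal ▸ hξ.1
      have hr : ξ ≤ ξ₂ := hbr ▸ hξ.2
      constructor
      · nlinarith [h1a j, mul_nonneg (sub_nonneg.2 hl) (hdj j)]
      · nlinarith [h2b j, mul_nonneg (sub_nonneg.2 hr) (hdj j)]
    · have hal : a = ξ₂ := min_eq_right hc
      have hbr : b = ξ₁ := max_eq_left hc
      have hl : ξ₂ ≤ ξ := hal ▸ hξ.1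
      have hr : ξ ≤ ξ₁ := hbr ▸ hξ.2
      constructor
      · nlinarith [h2a j, mul_nonneg (sub_nonneg.2 hl) (hdj j)]
      · nlinarith [h1b j, mul_nonneg (sub_nonneg.2 hr) (hdj j)]
  -- concavity of the slice
  have hconc : ConcaveOn ℝ (Set.Icc a b)
      (fun t => G univ f (fun j => x j + t * d j)) := by
    apply concaveOn_of_hasDerivWithinAt2_nonpos (convex_Icc a b)
      (f' := fun t => ∑ i ∈ (univ : Finset (Fin n)), d i *
        G (univ.erase i) (fun S => f (insert i S) - f S) (fun j => x j + t * d j))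
      (f'' := fun t => ∑ i ∈ (univ : Finset (Fin n)), d i *
        ∑ k ∈ (univ.erase i), d k *
          G ((univ.erase i).erase k)
            (fun S => (f (insert i (insert k S)) - f (insert k S)) - (f (insert i S) - f S))
            (fun j => x j + t * d j))
    · intro ξ _
      exact (hasDerivAt_G univ f x d ξ).continuousAt.continuousWithinAt
    · intro ξ _
      exact (hasDerivAt_G univ f x d ξ).hasDerivWithinAt
    · intro ξ _
      exact (HasDerivAt.fun_sum fun i _ =>
        ((hasDerivAt_G (univ.erase i) (fun S => f (insert i S) - f S) x d ξ).const_mul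
          (d i))).hasDerivWithinAt
    · intro ξ hξ
      have hz := hcoord ξ (interior_subset hξ)
      refine sum_nonpos fun i _ => mul_nonpos_iff.2 (Or.inl ⟨hdj i, ?_⟩)
      refine sum_nonpos fun k hk => mul_nonpos_iff.2 (Or.inl ⟨hdj k, ?_⟩)
      refine G_nonpos (fun j => (hz j).1) (fun j => (hz j).2) fun S hS => ?_
      rw [mem_powerset] at hS
      have hki : k ≠ i := (mem_erase.1 hk).1
      have hiS : i ∉ S := fun hc => ((mem_erase.1 ((mem_erase.1 (hS hc)).2)).1) rfl
      have hkS : k ∉ S := fun hc => (mem_erase.1 (hS hc)).1 rfl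
      have hiB : i ∉ insert k S := by
        simp only [mem_insert, not_or]
        exact ⟨fun hc => hki hc.symm, hiS⟩
      have := hsub S (insert k S) (subset_insert k S) i hiB
      linarith
  have hmem1 : ξ₁ ∈ Set.Icc a b := ⟨min_le_left _ _, le_max_left _ _⟩
  have hmem2 : ξ₂ ∈ Set.Icc a b := ⟨min_le_right _ _, le_max_right _ _⟩
  have hkey := hconc.2 hmem1 hmem2 hl0 (by linarith : (0:ℝ) ≤ 1 - l) (by ring)
  simp only [smul_eq_mul] at hkey
  have hrew : ∀ c : ℝ, multilinearExt f (x + c • d)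
      = G univ f (fun j => x j + c * d j) := by
    intro c
    have hxd : (x + c • d) = fun j => x j + c * d j := by
      funext j; simp
    rw [multilinearExt_eq_G, hxd]
  rw [ge_iff_le, hrew, hrew, hrew]
  exact hkey
end
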